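/- Let (M, d) be a metric space, k ≥ 1, and let r_1, …, r_t ∈ M. Let A_0, A_1, …, A_t be configurations such that A_i serves r_i for every 1 ≤ i ≤ t. Define B_0 := A_0 and B_i := A_{i-1} for 1 ≤ i ≤ t. Then the relaxed cost of B_0, …, B_t is at most three times the movement cost of A_0, …, A_t; that is, ∑_{i=1}^t D(B_{i-1}, B_i) + 2 ∑_{i=1}^t s(B_i, r_i) ≤ 3 ∑_{i=1}^t D(A_{i-1}, A_i). -/

import Mathlib

/-- The matching distance between two configurations of `k` servers. -/
noncomputable def matchDist {M : Type*} [MetricSpace M] {k : ℕ} (A B : Fin k → M) : ℝ :=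
  ⨅ σ : Equiv.Perm (Fin k), ∑ j, dist (A j) (B (σ j))

/-- The serving distance from a configuration to a request point. -/
noncomputable def servDist {M : Type*} [MetricSpace M] {k : ℕ} (A : Fin k → M) (r : M) : ℝ :=
  ⨅ j : Fin k, dist (A j) r

lemma matchDist_bdd {M : Type*} [MetricSpace M] {k : ℕ} (A B : Fin k → M) :
    BddBelow (Set.range fun σ : Equiv.Perm (Fin k) => ∑ j, dist (A j) (B (σ j))) := by
  refine ⟨0, ?_⟩
  rintro x ⟨σ, rfl⟩
  exact Finset.sum_nonneg fun _ _ => dist_nonneg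

lemma matchDist_nonneg {M : Type*} [MetricSpace M] {k : ℕ} (A B : Fin k → M) :
    0 ≤ matchDist A B :=
  le_ciInf fun σ => Finset.sum_nonneg fun _ _ => dist_nonneg

lemma matchDist_self {M : Type*} [MetricSpace M] {k : ℕ} (A : Fin k → M) :
    matchDist A A = 0 := by
  refine le_antisymm ?_ (matchDist_nonneg A A)
  have := ciInf_le (matchDist_bdd A A) (1 : Equiv.Perm (Fin k))
  simpa [matchDist] using this

lemma servDist_le_matchDist {M : Type*} [MetricSpace M] {k : ℕ} (hk : 1 ≤ k)
    {A C : Fin k → M} {r : M} (j0 : Fin k) (h : r = C j0) :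
    servDist A r ≤ matchDist A C := by
  refine le_ciInf fun σ => ?_
  have h1 : servDist A r ≤ dist (A (σ⁻¹ j0)) r := by
    refine ciInf_le ⟨0, ?_⟩ _
    rintro x ⟨j, rfl⟩; exact dist_nonneg
  refine h1.trans ?_
  have h2 : dist (A (σ⁻¹ j0)) (C (σ (σ⁻¹ j0))) ≤ ∑ j, dist (A j) (C (σ j)) :=
    Finset.single_le_sum (f := fun j => dist (A j) (C (σ j)))
      (fun _ _ => dist_nonneg) (Finset.mem_univ _)
  simpa [h] using h2

/-- if `A_0, …, A_t` is valid for `r_1, …, r_t` and `B_0 := A_0`,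
`B_i := A_{i-1}` for `1 ≤ i ≤ t`, then the relaxed cost of `B` is at most three
times the movement cost of `A`. -/
theorem relaxedCost_shift_le_three_mul {M : Type*} [MetricSpace M] {k t : ℕ} (hk : 1 ≤ k)
    (r : Fin t → M) (A B : Fin (t + 1) → Fin k → M)
    (hA : ∀ i : Fin t, ∃ j, r i = A i.succ j)
    (hB0 : B 0 = A 0)
    (hB : ∀ i : Fin t, B i.succ = A i.castSucc) :
    ∑ i : Fin t, matchDist (B i.castSucc) (B i.succ) +
        2 * ∑ i : Fin t, servDist (B i.succ) (r i) ≤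
      3 * ∑ i : Fin t, matchDist (A i.castSucc) (A i.succ) := by
  set S := ∑ i : Fin t, matchDist (A i.castSucc) (A i.succ) with hS
  have hSB : ∑ i : Fin t, matchDist (B i.castSucc) (B i.succ) ≤ S := by
    cases t with
    | zero => simp [hS]
    | succ s =>
      rw [Fin.sum_univ_succ]
      have h0 : matchDist (B (0 : Fin (s+1)).castSucc) (B (0 : Fin (s+1)).succ) = 0 := by
        have : B (0 : Fin (s+1)).succ = A 0 := by
          have := hB (0 : Fin (s+1)); simpa using this
        simp only [Fin.castSucc_zero, hB0, this, matchDist_self]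
      rw [h0, zero_add]
      have hterm : ∀ j : Fin s,
          matchDist (B j.succ.castSucc) (B j.succ.succ)
            = matchDist (A j.castSucc.castSucc) (A j.castSucc.succ) := by
        intro j
        have e1 : (j.succ.castSucc : Fin (s+2)) = j.castSucc.succ := by
          exact (Fin.succ_castSucc _).symm
        rw [e1, hB j.castSucc, hB j.succ, ← Fin.succ_castSucc]
      calc ∑ j : Fin s, matchDist (B j.succ.castSucc) (B j.succ.succ)
          = ∑ j : Fin s, matchDist (A j.castSucc.castSucc) (A j.castSucc.succ) := by
            exact Finset.sum_congr rfl fun j _ => hterm j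
        _ ≤ S := by
            rw [hS, Fin.sum_univ_castSucc]
            have := matchDist_nonneg (A (Fin.last s).castSucc) (A (Fin.last s).succ)
            linarith
  have hserv : ∑ i : Fin t, servDist (B i.succ) (r i) ≤ S := by
    refine Finset.sum_le_sum fun i _ => ?_
    obtain ⟨j0, hj0⟩ := hA i
    rw [hB i]
    exact servDist_le_matchDist hk j0 hj0
  linarith
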